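/- For every natural number m ≥ 1, the 2m-th derivative at x = 0 of the function x ↦ e^{2πx}/(e^{2πx} - 1)² - 1/(2πx)² (extended continuously at 0) equals -B_{2m+2} · (2π)^{2m} / (2m+2). -/

import Mathlib

open Real

section PartA
open PowerSeries

lemma exp_deriv' : d⁄dX ℚ (exp ℚ) = exp ℚ := by
  ext n
  rw [PowerSeries.coeff_derivative, PowerSeries.coeff_exp, PowerSeries.coeff_exp]
  simp only [Algebra.algebraMap_self, RingHom.id_apply]
  field_simp [Nat.factorial_succ]
  rw [Nat.factorial_succ]; push_cast; ring

lemma formalId :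
    X * d⁄dX ℚ (bernoulliPowerSeries ℚ) =
      bernoulliPowerSeries ℚ - bernoulliPowerSeries ℚ ^ 2 - X * bernoulliPowerSeries ℚ := by
  set P := bernoulliPowerSeries ℚ with hP
  have h : P * (exp ℚ - 1) = X := bernoulliPowerSeries_mul_exp_sub_one ℚ
  have h1 : P * exp ℚ + (exp ℚ - 1) * d⁄dX ℚ P = 1 := by
    have := congrArg (d⁄dX ℚ) h
    rw [Derivation.leibniz, derivative_X] at this
    simpa [exp_deriv', smul_eq_mul, mul_comm, map_sub] using this
  linear_combination (-(d⁄dX ℚ P) - P) * h + P * h1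

lemma coeffId (n : ℕ) :
    (1 - ((n:ℚ)+1)) * (bernoulli (n+1) / (n+1).factorial) =
      (∑ p ∈ Finset.HasAntidiagonal.antidiagonal (n+1),
        (bernoulli p.1 / p.1.factorial) * (bernoulli p.2 / p.2.factorial))
        + bernoulli n / n.factorial := by
  have := congrArg (PowerSeries.coeff (R := ℚ) (n+1)) formalId
  rw [coeff_succ_X_mul, PowerSeries.coeff_derivative, map_sub, map_sub, sq,
    PowerSeries.coeff_mul, coeff_succ_X_mul] at this
  simp only [bernoulliPowerSeries, coeff_mk, Algebra.algebraMap_self, RingHom.id_apply] at this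
  push_cast at this ⊢
  linear_combination -this

end PartA

section PartB
open Finset

lemma two_pow_le_fact (j : ℕ) : (2:ℚ)^j ≤ (j+1).factorial := by
  induction j with
  | zero => norm_num
  | succ j ih =>
    rw [pow_succ, Nat.factorial_succ]
    push_cast
    calc (2:ℚ)^j * 2 ≤ (j+1).factorial * 2 := by nlinarith [pow_pos (by norm_num : (0:ℚ) < 2) j]
    _ ≤ (j+1+1) * (j+1).factorial := by
        nlinarith [(Nat.cast_pos (α := ℚ)).2 (Nat.factorial_pos (j+1)), Nat.cast_nonneg (α := ℚ) j]

lemma geo_tail_le (m : ℕ) : ∑ k ∈ range (m+1), (1/2:ℚ)^(m+1-k) ≤ 1 := by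
  rw [← Finset.sum_range_reflect]
  have hc : ∀ j ∈ range (m+1), (1/2:ℚ)^(m+1-(m+1-1-j)) = (1/2)^(j+1) := by
    intro j hj; rw [mem_range] at hj; congr 1; omega
  rw [Finset.sum_congr rfl hc]
  have hg : ∑ j ∈ range (m+1), (1/2:ℚ)^(j+1) = (1/2) * ∑ j ∈ range (m+1), (1/2:ℚ)^j := by
    rw [Finset.mul_sum]; exact Finset.sum_congr rfl fun j _ => by ring
  rw [hg, geom_sum_eq (by norm_num)]
  have hd : ((1/2:ℚ)^(m+1) - 1)/((1/2:ℚ) - 1) = 2 - 2*(1/2)^(m+1) := by ring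
  rw [hd]
  nlinarith [pow_pos (by norm_num : (0:ℚ) < 1/2) (m+1)]

lemma abs_bernoulli_div_fact_le (n : ℕ) : |bernoulli n / n.factorial| ≤ 1 := by
  induction n using Nat.strong_induction_on with
  | _ n ih =>
    match n with
    | 0 => norm_num
    | (m+1) =>
      have hs := sum_bernoulli (m+2)
      rw [if_neg (by omega), Finset.sum_range_succ] at hs
      have hch : ((m+2).choose (m+1) : ℚ) = (m+2 : ℚ) := by
        rw [Nat.choose_succ_self_right]; push_cast; ring
      have key : ((m+2:ℚ)) * bernoulli (m+1) = - ∑ k ∈ range (m+1), ((m+2).choose k : ℚ) * bernoulli k := by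
        rw [hch] at hs; linarith [hs]
      have habs : |bernoulli (m+1)| * (m+2) ≤ ∑ k ∈ range (m+1), ((m+2).choose k : ℚ) * |bernoulli k| := by
        calc |bernoulli (m+1)| * (m+2)
            = |((m+2:ℚ)) * bernoulli (m+1)| := by
              rw [abs_mul, abs_of_nonneg (by positivity : (0:ℚ) ≤ (m+2:ℚ))]; ring
          _ = |∑ k ∈ range (m+1), ((m+2).choose k : ℚ) * bernoulli k| := by rw [key, abs_neg]
          _ ≤ ∑ k ∈ range (m+1), |((m+2).choose k : ℚ) * bernoulli k| := Finset.abs_sum_le_sum_abs _ _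
          _ = ∑ k ∈ range (m+1), ((m+2).choose k : ℚ) * |bernoulli k| := by
              refine Finset.sum_congr rfl fun k _ => ?_
              rw [abs_mul, abs_of_nonneg (by positivity)]
      have hterm : ∀ k ∈ range (m+1), ((m+2).choose k : ℚ) * |bernoulli k| ≤
          ((m+2).factorial : ℚ) / ((m+2-k).factorial : ℚ) := by
        intro k hk
        rw [mem_range] at hk
        have hkle : k ≤ m+2 := by omega
        have hfac : ((m+2).choose k : ℚ) * k.factorial * (m+2-k).factorial = (m+2).factorial := by
          exact_mod_cast congrArg (Nat.cast (R := ℚ)) (Nat.choose_mul_factorial_mul_factorial hkle)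
        have hB : |bernoulli k| ≤ k.factorial := by
          have := ih k (by omega)
          rwa [abs_div, abs_of_nonneg (by positivity : (0:ℚ) ≤ (k.factorial:ℚ)), div_le_one (by positivity)] at this
        have h1 : (0:ℚ) < (m+2-k).factorial := by positivity
        have h2 : (0:ℚ) < ((m+2).choose k : ℚ) := by
          exact_mod_cast Nat.choose_pos hkle
        calc ((m+2).choose k : ℚ) * |bernoulli k| ≤ ((m+2).choose k : ℚ) * k.factorial := by nlinarith
          _ = ((m+2).factorial : ℚ) / ((m+2-k).factorial : ℚ) := by
              field_simp [← hfac]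
              exact hfac
      have hsum : ∑ k ∈ range (m+1), ((m+2).factorial : ℚ) / ((m+2-k).factorial : ℚ) ≤
          ((m+2).factorial : ℚ) * 1 := by
        have hb : ∀ k ∈ range (m+1), ((m+2).factorial : ℚ) / ((m+2-k).factorial : ℚ) ≤
            ((m+2).factorial : ℚ) * (1/2)^(m+1-k) := by
          intro k hk
          rw [mem_range] at hk
          have h2p : (2:ℚ)^(m+1-k) ≤ ((m+2-k).factorial : ℚ) := by
            have := two_pow_le_fact (m+1-k)
            have he : m+1-k+1 = m+2-k := by omega
            rwa [he] at this
          have h2pos : (0:ℚ) < 2^(m+1-k) := by positivity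
          have heq : ((m+2).factorial : ℚ) * (1/2)^(m+1-k) = ((m+2).factorial : ℚ) / 2^(m+1-k) := by
            rw [div_pow, one_pow, mul_one_div]
          rw [heq]
          exact div_le_div_of_nonneg_left (by positivity) h2pos h2p
        calc ∑ k ∈ range (m+1), ((m+2).factorial : ℚ) / ((m+2-k).factorial : ℚ)
            ≤ ∑ k ∈ range (m+1), ((m+2).factorial : ℚ) * (1/2)^(m+1-k) :=
              Finset.sum_le_sum hb
          _ = ((m+2).factorial : ℚ) * ∑ k ∈ range (m+1), (1/2:ℚ)^(m+1-k) := by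
              rw [Finset.mul_sum]
          _ ≤ ((m+2).factorial : ℚ) * 1 := by
              have := geo_tail_le m
              nlinarith [(Nat.cast_pos (α := ℚ)).2 (Nat.factorial_pos (m+2))]
      rw [abs_div, abs_of_nonneg (by positivity : (0:ℚ) ≤ ((m+1).factorial:ℚ)),
        div_le_one (by positivity)]
      have hfact : ((m+2).factorial : ℚ) = (m+2) * (m+1).factorial := by
        rw [Nat.factorial_succ]; push_cast; ring
      have := le_trans habs (le_trans (Finset.sum_le_sum hterm) hsum)
      rw [hfact] at this
      nlinarith [abs_nonneg (bernoulli (m+1)), (Nat.cast_pos (α := ℚ)).2 (Nat.factorial_pos (m+1))]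

end PartB

section PartC
open Finset

noncomputable def Aco : ℕ → ℝ := fun n => ((bernoulli n : ℚ) : ℝ) / n.factorial

lemma Aco_abs_le (n : ℕ) : |Aco n| ≤ 1 := by
  have := abs_bernoulli_div_fact_le n
  have h2 : ((|bernoulli n / n.factorial| : ℚ) : ℝ) ≤ 1 := by exact_mod_cast this
  rw [Rat.cast_abs] at h2
  rw [Aco]
  rw [show ((bernoulli n : ℚ) : ℝ) / (n.factorial : ℝ) = ((bernoulli n / n.factorial : ℚ) : ℝ) by
    push_cast; ring]
  exact h2

lemma Aco_zero : Aco 0 = 1 := by simp [Aco]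

lemma coeffId_real (m : ℕ) :
    (1 - (m:ℝ)) * Aco m =
      (∑ p ∈ Finset.HasAntidiagonal.antidiagonal m, Aco p.1 * Aco p.2) + (if m = 0 then 0 else Aco (m-1)) := by
  match m with
  | 0 => simp [Aco_zero]
  | (n+1) =>
    have := coeffId n
    have hc := congrArg (fun q : ℚ => (q : ℝ)) this
    simp only [if_neg (Nat.succ_ne_zero n)]
    push_cast at hc
    simp only [Aco]
    push_cast
    convert hc using 2 <;> norm_num

lemma hasSum_main {t : ℝ} (ht : |t| ≤ 1/2) :
    HasSum (fun n : ℕ => (-((n:ℝ)+1) * Aco (n+2)) * t^n)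
      (if t = 0 then (-1/12 : ℝ) else Real.exp t / (Real.exp t - 1)^2 - 1/t^2) := by
  by_cases h0 : t = 0
  · subst h0
    rw [if_pos rfl]
    have : HasSum (fun n : ℕ => (-((n:ℝ)+1) * Aco (n+2)) * (0:ℝ)^n)
        ((fun n : ℕ => (-((n:ℝ)+1) * Aco (n+2)) * (0:ℝ)^n) 0) :=
      hasSum_single 0 (fun b hb => by rw [zero_pow hb, mul_zero])
    have hA2 : Aco 2 = 1/12 := by
      have hb2 : bernoulli 2 = 1/6 := by
        rw [bernoulli_eq_bernoulli'_of_ne_one (by norm_num), bernoulli'_two]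
      rw [Aco, hb2]
      norm_num [Nat.factorial]
    have hv : ((fun n : ℕ => (-((n:ℝ)+1) * Aco (n+2)) * (0:ℝ)^n) 0) = -1/12 := by
      norm_num [hA2]
    rwa [hv] at this
  · rw [if_neg h0]
    -- summability of the basic series
    have hgeo : Summable (fun n : ℕ => (1/2:ℝ)^n) :=
      summable_geometric_of_lt_one (by norm_num) (by norm_num)
    have hbound : ∀ n : ℕ, ‖Aco n * t^n‖ ≤ (1/2)^n := by
      intro n
      rw [norm_mul, norm_pow]
      calc ‖Aco n‖ * ‖t‖^n ≤ 1 * (1/2)^n := by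
            apply mul_le_mul (Aco_abs_le n) (pow_le_pow_left₀ (norm_nonneg t) ht n)
              (by positivity) zero_le_one
        _ = (1/2)^n := one_mul _
    have sA : Summable (fun n : ℕ => ‖Aco n * t^n‖) :=
      Summable.of_nonneg_of_le (fun n => norm_nonneg _) hbound hgeo
    have hS : HasSum (fun n : ℕ => Aco n * t^n) (∑' n, Aco n * t^n) := sA.of_norm.hasSum
    set S := ∑' n : ℕ, Aco n * t^n with hSdef
    -- exp series
    have hExp : HasSum (fun n : ℕ => t^n / n.factorial) (Real.exp t) := by
      rw [Real.exp_eq_exp_ℝ]; exact NormedSpace.expSeries_div_hasSum_exp t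
    set E : ℕ → ℝ := fun n => if n = 0 then (0:ℝ) else t^n / n.factorial with hEdef
    have hE : HasSum E (Real.exp t - 1) := by
      apply (hasSum_nat_add_iff' (f := E) 1).mp
      have h3 : HasSum (fun n : ℕ => t^(n+1) / (n+1).factorial) (Real.exp t - 1) := by
        have := (hasSum_nat_add_iff' (f := fun n : ℕ => t^n / n.factorial) 1).mpr hExp
        simpa using this
      simpa [hEdef] using h3
    have sE : Summable (fun n : ℕ => ‖E n‖) := by
      apply Summable.of_nonneg_of_le (fun n => norm_nonneg _) _ hgeo
      intro n
      match n with
      | 0 => simp [hEdef]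
      | (k+1) =>
        simp only [hEdef, if_neg (Nat.succ_ne_zero k)]
        rw [norm_div, norm_pow]
        have h1 : (1:ℝ) ≤ ‖((k+1).factorial : ℝ)‖ := by
          rw [Real.norm_natCast]
          exact_mod_cast Nat.one_le_iff_ne_zero.mpr (Nat.factorial_ne_zero _)
        calc ‖t‖^(k+1) / ‖((k+1).factorial : ℝ)‖ ≤ ‖t‖^(k+1) / 1 :=
              div_le_div_of_nonneg_left (by positivity) (by norm_num) h1 |>.trans_eq (by ring)
          _ = ‖t‖^(k+1) := by ring
          _ ≤ (1/2)^(k+1) := pow_le_pow_left₀ (norm_nonneg t) ht (k+1)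
    -- Cauchy product: S * (exp t - 1) = t
    have hprod : S * (Real.exp t - 1) =
        ∑' n : ℕ, ∑ p ∈ Finset.HasAntidiagonal.antidiagonal n, (Aco p.1 * t^p.1) * E p.2 := by
      rw [← hE.tsum_eq]
      exact tsum_mul_tsum_eq_tsum_sum_antidiagonal_of_summable_norm sA sE
    have hinner : ∀ n : ℕ, (∑ p ∈ Finset.HasAntidiagonal.antidiagonal n, (Aco p.1 * t^p.1) * E p.2) =
        if n = 1 then t else 0 := by
      intro n
      rw [Finset.Nat.sum_antidiagonal_eq_sum_range_succ_mk, Finset.sum_range_succ]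
      have hlast : (Aco n * t^n) * E (n - n) = 0 := by
        simp [hEdef, Nat.sub_self]
      rw [hlast, add_zero]
      have hterm : ∀ k ∈ range n, (Aco k * t^k) * E (n - k) =
          ((n.choose k : ℝ) * ((bernoulli k : ℚ) : ℝ)) * (t^n / n.factorial) := by
        intro k hk
        rw [mem_range] at hk
        have hkn : k ≤ n := hk.le
        have hne : n - k ≠ 0 := by omega
        simp only [hEdef, if_neg hne, Aco]
        have hpow : t^k * t^(n-k) = t^n := by
          rw [← pow_add]; congr 1; omega
        have hfac : ((n.choose k : ℝ)) * (k.factorial : ℝ) * ((n-k).factorial : ℝ)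
            = (n.factorial : ℝ) := by
          exact_mod_cast congrArg (Nat.cast (R := ℝ)) (Nat.choose_mul_factorial_mul_factorial hkn)
        have hk0 : (k.factorial : ℝ) ≠ 0 := by positivity
        have hnk0 : ((n-k).factorial : ℝ) ≠ 0 := by positivity
        have hn0 : (n.factorial : ℝ) ≠ 0 := by positivity
        field_simp
        rw [← hfac]
        linear_combination (((bernoulli k : ℚ) : ℝ) * (n.choose k : ℝ) * (k.factorial : ℝ) * ((n-k).factorial : ℝ)) * hpow
      rw [Finset.sum_congr rfl hterm, ← Finset.sum_mul]
      have hsb : (∑ k ∈ range n, (n.choose k : ℝ) * ((bernoulli k : ℚ) : ℝ)) =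
          if n = 1 then 1 else 0 := by
        have hc := congrArg (fun q : ℚ => (q : ℝ)) (sum_bernoulli n)
        push_cast [apply_ite (fun q : ℚ => (q : ℝ))] at hc
        convert hc using 2 <;> norm_num
      rw [hsb]
      by_cases hn1 : n = 1
      · subst hn1; norm_num [Nat.factorial]
      · rw [if_neg hn1, if_neg hn1, zero_mul]
    have he1 : Real.exp t - 1 ≠ 0 := by
      intro h
      exact h0 ((Real.exp_eq_one_iff t).mp (by linarith [sub_eq_zero.mp h]))
    have hSprod : S * (Real.exp t - 1) = t := by
      rw [hprod]
      rw [tsum_congr hinner]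
      exact tsum_eq_single 1 (fun b hb => by rw [if_neg hb]) |>.trans (if_pos rfl)
    have hSval : S = t / (Real.exp t - 1) := by
      field_simp [he1] at hSprod ⊢
      linarith [hSprod]
    -- Cauchy square
    set c2 : ℕ → ℝ := fun n => ∑ p ∈ Finset.HasAntidiagonal.antidiagonal n, (Aco p.1 * t^p.1) * (Aco p.2 * t^p.2)
      with hc2def
    have hc2 : HasSum c2 (S * S) := by
      have hsum2 : Summable c2 :=
        (summable_norm_sum_mul_antidiagonal_of_summable_norm sA sA).of_norm
      have heq2 := tsum_mul_tsum_eq_tsum_sum_antidiagonal_of_summable_norm sA sA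
      exact hsum2.hasSum_iff.mpr heq2.symm
    set c1 : ℕ → ℝ := fun n => if n = 0 then (0:ℝ) else Aco (n-1) * t^n with hc1def
    have hc1 : HasSum c1 (t * S) := by
      apply (hasSum_nat_add_iff' (f := c1) 1).mp
      have := hS.mul_left t
      have heq : (fun n : ℕ => c1 (n+1)) = fun n : ℕ => t * (Aco n * t^n) := by
        funext n
        simp only [hc1def, if_neg (Nat.succ_ne_zero n), Nat.add_sub_cancel]
        ring
      rw [heq]
      simpa [hc1def] using this
    set G : ℕ → ℝ := fun m => (1 - (m:ℝ)) * Aco m * t^m with hGdef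
    have hGpt : ∀ m, G m = c2 m + c1 m := by
      intro m
      have hid := coeffId_real m
      have hc2m : c2 m = (∑ p ∈ Finset.HasAntidiagonal.antidiagonal m, Aco p.1 * Aco p.2) * t^m := by
        rw [hc2def, Finset.sum_mul]
        refine Finset.sum_congr rfl fun p hp => ?_
        rw [Finset.HasAntidiagonal.mem_antidiagonal] at hp
        rw [← hp, pow_add]
        ring
      have hc1m : c1 m = (if m = 0 then (0:ℝ) else Aco (m-1)) * t^m := by
        by_cases hm : m = 0
        · simp [hc1def, hm]
        · simp [hc1def, hm]
      rw [hGdef, hc2m, hc1m]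
      simp only []
      calc (1 - (m:ℝ)) * Aco m * t^m
          = ((1 - (m:ℝ)) * Aco m) * t^m := by ring
        _ = ((∑ p ∈ Finset.HasAntidiagonal.antidiagonal m, Aco p.1 * Aco p.2)
              + (if m = 0 then 0 else Aco (m-1))) * t^m := by rw [hid]
        _ = _ := by ring
    have hG : HasSum G (S * S + t * S) := by
      have : G = fun m => c2 m + c1 m := funext hGpt
      rw [this]
      exact hc2.add hc1
    have hG01 : ∑ i ∈ Finset.range 2, G i = 1 := by
      rw [Finset.sum_range_succ, Finset.sum_range_succ, Finset.sum_range_zero]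
      simp [hGdef, Aco_zero]
    have hG2 : HasSum (fun n : ℕ => G (n+2)) (S * S + t * S - 1) := by
      have := (hasSum_nat_add_iff' (f := G) 2).mpr hG
      rwa [hG01] at this
    have ht2 : (t:ℝ)^2 ≠ 0 := pow_ne_zero 2 h0
    have hfun : (fun n : ℕ => G (n+2)) =
        fun n : ℕ => t^2 * ((-((n:ℝ)+1) * Aco (n+2)) * t^n) := by
      funext n
      rw [hGdef]
      push_cast
      ring
    have hval : S * S + t * S - 1 = t^2 * ((S * S + t * S - 1)/t^2) := by
      field_simp
    rw [hfun, hval] at hG2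
    have hw := (hasSum_mul_left_iff ht2).mp hG2
    have hfinal : (S * S + t * S - 1)/t^2 = Real.exp t / (Real.exp t - 1)^2 - 1/t^2 := by
      rw [hSval]
      field_simp
      ring
    rwa [hfinal] at hw

end PartC

section PartD
open Finset

theorem iteratedDeriv_exp_function (m : ℕ) (hm : 1 ≤ m) :
    iteratedDeriv (2 * m)
      (fun x : ℝ => if x = 0 then (-1 / 12 : ℝ)
        else Real.exp (2 * π * x) / (Real.exp (2 * π * x) - 1) ^ 2 - 1 / (2 * π * x) ^ 2) 0 =
      -((bernoulli (2 * m + 2) : ℚ) : ℝ) * (2 * π) ^ (2 * m) / (2 * m + 2) := by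
  set f : ℝ → ℝ := fun x : ℝ => if x = 0 then (-1 / 12 : ℝ)
      else Real.exp (2 * π * x) / (Real.exp (2 * π * x) - 1) ^ 2 - 1 / (2 * π * x) ^ 2 with hfdef
  set c : ℕ → ℝ := fun n => (-((n:ℝ)+1) * Aco (n+2)) * (2*π)^n with hcdef
  set p : FormalMultilinearSeries ℝ ℝ ℝ := FormalMultilinearSeries.ofScalars ℝ c with hpdef
  have hpi : (0:ℝ) < π := Real.pi_pos
  have hr'pos : (0:ℝ) < 1/(4*π) := by positivity
  set r' : NNReal := ⟨1/(4*π), hr'pos.le⟩ with hr'def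
  have hrad : (r' : ENNReal) ≤ p.radius := by
    apply p.le_radius_of_bound 2
    intro n
    have hnorm : ‖p n‖ = |c n| := by
      rw [hpdef]
      exact FormalMultilinearSeries.ofScalars_norm ℝ c n
    rw [hnorm]
    have hcabs : |c n| = ((n:ℝ)+1) * |Aco (n+2)| * (2*π)^n := by
      rw [hcdef, abs_mul, abs_mul, abs_neg, abs_of_nonneg (by positivity : (0:ℝ) ≤ (n:ℝ)+1),
        abs_of_nonneg (by positivity : (0:ℝ) ≤ (2*π)^n)]
    have hr'c : (r' : ℝ)^n = (1/(4*π))^n := rfl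
    rw [hcabs, hr'c]
    have h1 : ((n:ℝ)+1) * |Aco (n+2)| * (2*π)^n * (1/(4*π))^n
        = ((n:ℝ)+1) * |Aco (n+2)| * (1/2)^n := by
      rw [mul_assoc, ← mul_pow]
      congr 2
      field_simp
      ring
    rw [h1]
    have h2 : ((n:ℝ)+1) ≤ 2^(n+1) := by
      have := Nat.lt_two_pow_self (n := n)
      have h3 : (n:ℝ) + 1 ≤ 2^n := by exact_mod_cast Nat.succ_le_of_lt this
      calc ((n:ℝ)+1) ≤ 2^n := h3
        _ ≤ 2^(n+1) := by
          apply pow_le_pow_right₀ (by norm_num)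
          omega
    have h4 : (0:ℝ) < (1/2:ℝ)^n := by positivity
    calc ((n:ℝ)+1) * |Aco (n+2)| * (1/2)^n ≤ ((n:ℝ)+1) * 1 * (1/2)^n :=
          mul_le_mul_of_nonneg_right
            (mul_le_mul_of_nonneg_left (Aco_abs_le (n+2)) (by positivity)) h4.le
      _ = ((n:ℝ)+1) * (1/2)^n := by ring
      _ ≤ 2^(n+1) * (1/2)^n := by nlinarith
      _ = 2 := by
          rw [pow_succ]
          rw [show ((1:ℝ)/2)^n = (2^n)⁻¹ by rw [one_div, inv_pow]]
          field_simp
  have hf : HasFPowerSeriesOnBall f p 0 (r' : ENNReal) := by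
    constructor
    · exact hrad
    · exact_mod_cast hr'pos
    · intro y hy
      rw [EMetric.mem_ball, edist_zero_right] at hy
      have hynorm : |y| < 1/(4*π) := by
        have := ENNReal.coe_lt_coe.mp (by exact_mod_cast hy : (‖y‖₊ : ENNReal) < (r' : ENNReal))
        have h5 : ‖y‖ < (r' : ℝ) := by exact_mod_cast this
        rwa [show (r' : ℝ) = 1/(4*π) from rfl] at h5
      have ht : |2*π*y| ≤ 1/2 := by
        rw [abs_mul, abs_of_nonneg (by positivity : (0:ℝ) ≤ 2*π)]
        calc 2*π*|y| ≤ 2*π*(1/(4*π)) := by nlinarith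
          _ = 1/2 := by field_simp; ring
      have hsum := hasSum_main ht
      have heq1 : (fun n : ℕ => (p n) fun _ => y) = fun n : ℕ => (-((n:ℝ)+1) * Aco (n+2)) * (2*π*y)^n := by
        funext n
        rw [hpdef, FormalMultilinearSeries.ofScalars_apply_eq, smul_eq_mul, hcdef]
        rw [mul_pow]
        ring
      have heq2 : f (0 + y) = if 2*π*y = 0 then (-1/12 : ℝ)
          else Real.exp (2*π*y) / (Real.exp (2*π*y) - 1)^2 - 1/(2*π*y)^2 := by
        rw [zero_add, hfdef]
        have hcond : (2*π*y = 0) ↔ (y = 0) := by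
          constructor
          · intro h
            have : (2*π) ≠ 0 := by positivity
            rcases mul_eq_zero.mp h with h' | h'
            · exact absurd h' this
            · exact h'
          · intro h; rw [h]; ring
        by_cases hy0 : y = 0
        · simp only [hy0, mul_zero, if_pos rfl]
        · simp only [if_neg hy0, if_neg (fun h => hy0 (hcond.mp h))]
      rw [heq1, heq2]
      exact hsum
  have hiter : iteratedDeriv (2*m) f 0 = ((2*m).factorial : ℝ) * c (2*m) := by
    rw [iteratedDeriv_eq_iteratedFDeriv]
    rw [← hf.factorial_smul 1 (2*m)]
    rw [hpdef, FormalMultilinearSeries.ofScalars_apply_eq, one_pow, smul_eq_mul, mul_one,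
      nsmul_eq_mul]
  rw [hiter]
  rw [hcdef]
  simp only [Aco]
  have hfac : ((2*m+2).factorial : ℝ) = (2*m+2) * (2*m+1) * ((2*m).factorial : ℝ) := by
    rw [show 2*m+2 = (2*m+1)+1 by ring, Nat.factorial_succ, Nat.factorial_succ]
    push_cast
    ring
  have hfne : ((2*m).factorial : ℝ) ≠ 0 := by positivity
  have h2m2 : ((2*m:ℝ)+2) ≠ 0 := by positivity
  rw [hfac]
  push_cast
  field_simp

end PartD
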